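/- arXiv:2012.02912 — 3 statements merged into one kernel-verified Lean document; each statement's English description precedes it below -/
import Mathlib

section
/- Let f, g : ℝ → ℝ≥0 be measurable, and suppose there exist s† ≤ s‡ such that f(y) ≥ α·g(y) for all y ≤ s† and for all y ≥ s‡, and ∫_s^S f ≥ α·∫_s^S g whenever s ≤ s† and s† ≤ S ≤ s‡, with ∫_s^S g > 0 for s < S. Then for all s < s̲ ≤ s† and all S > s̲: (∫_s^S f(max(y, s̲)) dy) / (∫_s^S g(max(y, s̲)) dy) ≥ α. -/
open Filter Set MeasureTheory intervalIntegral

lemma loc_intervalIntegrable {f : ℝ → ℝ} (hf : LocallyIntegrable f) (a b : ℝ) :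
    IntervalIntegrable f volume a b := by
  rw [intervalIntegrable_iff]
  exact (hf.integrableOn_isCompact isCompact_uIcc).mono_set uIoc_subset_uIcc

lemma trunc_integrable_left {f : ℝ → ℝ} (a sl : ℝ) (hab : a ≤ sl) :
    IntervalIntegrable (fun y => f (max y sl)) volume a sl := by
  refine (_root_.intervalIntegrable_const (c := f sl)).congr_ae ?_
  refine (ae_restrict_iff' measurableSet_uIoc).2 (Filter.Eventually.of_forall ?_)
  intro y hy
  rw [uIoc_of_le hab] at hy
  simp [max_eq_right hy.2]

lemma trunc_integrable_right {f : ℝ → ℝ} (hf : LocallyIntegrable f) (sl b : ℝ) (hab : sl ≤ b) :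
    IntervalIntegrable (fun y => f (max y sl)) volume sl b := by
  refine (loc_intervalIntegrable hf sl b).congr_ae ?_
  refine (ae_restrict_iff' measurableSet_uIoc).2 (Filter.Eventually.of_forall ?_)
  intro y hy
  rw [uIoc_of_le hab] at hy
  simp [max_eq_left hy.1.le]

lemma trunc_split {f : ℝ → ℝ} (hf : LocallyIntegrable f) (s sl S : ℝ)
    (h1 : s ≤ sl) (h2 : sl ≤ S) :
    ∫ y in s..S, f (max y sl) = (sl - s) * f sl + ∫ y in sl..S, f y := by
  rw [← integral_add_adjacent_intervals (trunc_integrable_left s sl h1)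
    (trunc_integrable_right hf sl S h2)]
  congr 1
  · rw [integral_congr (g := fun _ => f sl) ?_, intervalIntegral.integral_const, smul_eq_mul]
    intro y hy
    rw [uIcc_of_le h1] at hy
    simp [max_eq_right hy.2]
  · refine integral_congr ?_
    intro y hy
    rw [uIcc_of_le h2] at hy
    simp [max_eq_left hy.1]

lemma ptwise_mono {f g : ℝ → ℝ} {α : ℝ} (hf : LocallyIntegrable f) (hg : LocallyIntegrable g)
    (a b : ℝ) (hab : a ≤ b) (h : ∀ y ∈ Icc a b, α * g y ≤ f y) :
    α * ∫ y in a..b, g y ≤ ∫ y in a..b, f y := by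
  rw [← intervalIntegral.integral_const_mul]
  exact intervalIntegral.integral_mono_on hab ((loc_intervalIntegrable hg a b).const_mul α)
    (loc_intervalIntegrable hf a b) h

/-- Case analysis verifying the modified average-cost lower bound:
if `f ≥ α·g` to the left of `s†` and to the right of `s‡`, and
`∫_s^S f ≥ α ∫_s^S g` for `s ≤ s†` and `s† ≤ S ≤ s‡`, then the truncated
ratio `(∫_s^S f(max(y,s̲)))/(∫_s^S g(max(y,s̲)))` is at least `α` for all
`s < s̲ ≤ s†` and `S > s̲`. -/
theorem truncated_ratio_lower_bound
    (f g : ℝ → ℝ) (α : ℝ)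
    (hfm : Measurable f) (hgm : Measurable g)
    (hfnn : ∀ y, 0 ≤ f y) (hgnn : ∀ y, 0 ≤ g y)
    (hfint : LocallyIntegrable f) (hgint : LocallyIntegrable g)
    (sdag sddag : ℝ) (hss : sdag ≤ sddag)
    (hleft : ∀ y ≤ sdag, α * g y ≤ f y)
    (hright : ∀ y ≥ sddag, α * g y ≤ f y)
    (hmid : ∀ s S : ℝ, s ≤ sdag → sdag ≤ S → S ≤ sddag →
      α * (∫ y in s..S, g y) ≤ ∫ y in s..S, f y)
    (hgpos : ∀ s S : ℝ, s < S → 0 < ∫ y in s..S, g y) :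
    ∀ s sl : ℝ, s < sl → sl ≤ sdag → ∀ S : ℝ, sl < S →
      α ≤ (∫ y in s..S, f (max y sl)) / (∫ y in s..S, g (max y sl)) := by
  intro s sl hssl hsld S hslS
  rw [trunc_split hfint s sl S hssl.le hslS.le, trunc_split hgint s sl S hssl.le hslS.le]
  -- key: α * ∫_sl^S g ≤ ∫_sl^S f
  have key : α * ∫ y in sl..S, g y ≤ ∫ y in sl..S, f y := by
    rcases le_total S sdag with hS | hS
    · exact ptwise_mono hfint hgint sl S hslS.le fun y hy => hleft y (hy.2.trans hS)
    · rcases le_total S sddag with hS2 | hS2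
      · exact hmid sl S hsld hS hS2
      · have h1 : α * ∫ y in sl..sddag, g y ≤ ∫ y in sl..sddag, f y :=
          hmid sl sddag hsld hss le_rfl
        have h2 : α * ∫ y in sddag..S, g y ≤ ∫ y in sddag..S, f y :=
          ptwise_mono hfint hgint sddag S hS2 fun y hy => hright y hy.1
        have hfadd := integral_add_adjacent_intervals (loc_intervalIntegrable hfint sl sddag)
          (loc_intervalIntegrable hfint sddag S)
        have hgadd := integral_add_adjacent_intervals (loc_intervalIntegrable hgint sl sddag)
          (loc_intervalIntegrable hgint sddag S)
        rw [← hfadd, ← hgadd, mul_add]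
        exact add_le_add h1 h2
  have hD : 0 < (sl - s) * g sl + ∫ y in sl..S, g y := by
    have := hgpos sl S hslS
    nlinarith [hgnn sl]
  rw [le_div_iff₀ hD, mul_add]
  have h1 : α * ((sl - s) * g sl) ≤ (sl - s) * f sl := by
    have := hleft sl hsld
    nlinarith
  linarith
end

section
/- Suppose μ, σ : ℝ → ℝ are continuous with 0 < μ̲ ≤ μ ≤ μ̄ < ∞ and 0 < σ̲ ≤ σ ≤ σ̄ < ∞, and h : ℝ → [0,∞) is continuous, polynomially bounded, and h(z) → ∞ as z → ∞. Define g(z) := 2∫_z^∞ (h(u)/σ(u)²)·exp(−∫_z^u 2μ(y)/σ(y)² dy) du. Then lim_{z→∞} g(z) = ∞. -/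
open Filter Set MeasureTheory intervalIntegral
open scoped Topology

/-- `g(z) = 2∫_z^∞ (h(u)/σ(u)²) exp(−∫_z^u 2μ/σ²) du` diverges as `z → ∞`
when `h` is continuous, polynomially bounded, and `h(z) → ∞` at `+∞`. -/
theorem g_diverges_at_top
    (μ σ : ℝ → ℝ) (hμc : Continuous μ) (hσc : Continuous σ)
    (μlo μhi σlo σhi : ℝ)
    (hμlo : 0 < μlo) (hμ : ∀ z, μlo ≤ μ z ∧ μ z ≤ μhi)
    (hσlo : 0 < σlo) (hσ : ∀ z, σlo ≤ σ z ∧ σ z ≤ σhi)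
    (h : ℝ → ℝ) (hhc : Continuous h) (hhnn : ∀ z, 0 ≤ h z)
    (hpoly : ∃ b₁ b₂ : ℝ, ∃ n : ℕ, ∀ z, |h z| ≤ b₁ + b₂ * |z| ^ n)
    (hhtop : Tendsto h atTop atTop) :
    Tendsto (fun z : ℝ =>
        2 * ∫ u in Set.Ioi z,
          (h u / (σ u) ^ 2) * Real.exp (-(∫ y in z..u, 2 * μ y / (σ y) ^ 2)))
      atTop atTop := by
  obtain ⟨b₁, b₂, n, hb⟩ := hpoly
  have hσhi : 0 < σhi := lt_of_lt_of_le hσlo (le_trans (hσ 0).1 (hσ 0).2)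
  have hμhi : 0 < μhi := lt_of_lt_of_le hμlo (le_trans (hμ 0).1 (hμ 0).2)
  set c' : ℝ := 2 * μlo / σhi ^ 2 with hc'def
  set c : ℝ := 2 * μhi / σlo ^ 2 with hcdef
  have hc'pos : 0 < c' := by positivity
  have hcpos : 0 < c := by positivity
  have hσpos : ∀ y, 0 < σ y := fun y => lt_of_lt_of_le hσlo (hσ y).1
  have hσne : ∀ y, (σ y : ℝ) ^ 2 ≠ 0 := fun y => by have := hσpos y; positivity
  have hφc : Continuous (fun y => 2 * μ y / σ y ^ 2) :=
    Continuous.div (by continuity) (by continuity) hσne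
  set F : ℝ → ℝ → ℝ := fun z u => ∫ y in z..u, 2 * μ y / σ y ^ 2 with hFdef
  have hFc : ∀ z, Continuous (F z) := fun z =>
    intervalIntegral.continuous_primitive (fun a b => hφc.intervalIntegrable a b) z
  -- pointwise bounds on the integrand of F
  have hφub : ∀ y, 2 * μ y / σ y ^ 2 ≤ c := by
    intro y
    exact div_le_div₀ (by positivity) (by linarith [(hμ y).2]) (by positivity)
      (pow_le_pow_left₀ hσlo.le (hσ y).1 2)
  have hφlb : ∀ y, c' ≤ 2 * μ y / σ y ^ 2 := by
    intro y
    exact div_le_div₀ (by linarith [(hμ y).1]) (by linarith [(hμ y).1])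
      (pow_pos (hσpos y) 2) (pow_le_pow_left₀ (hσpos y).le (hσ y).2 2)
  -- bounds on F
  have hFub : ∀ z u, z ≤ u → F z u ≤ c * (u - z) := by
    intro z u hzu
    calc F z u ≤ ∫ _ in z..u, c := intervalIntegral.integral_mono_on hzu
          (hφc.intervalIntegrable z u)
          (_root_.intervalIntegrable_const (μ := volume) (c := c)) (fun y _ => hφub y)
      _ = c * (u - z) := by rw [intervalIntegral.integral_const, smul_eq_mul, mul_comm]
  have hFlb : ∀ z u, z ≤ u → c' * (u - z) ≤ F z u := by
    intro z u hzu
    calc c' * (u - z) = ∫ _ in z..u, c' := by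
          rw [intervalIntegral.integral_const, smul_eq_mul, mul_comm]
      _ ≤ F z u := intervalIntegral.integral_mono_on hzu
          (_root_.intervalIntegrable_const (μ := volume) (c := c'))
          (hφc.intervalIntegrable z u) (fun y _ => hφlb y)
  set f : ℝ → ℝ → ℝ := fun z u => (h u / σ u ^ 2) * Real.exp (-(F z u)) with hfdef
  have hfnn : ∀ z u, 0 ≤ f z u := fun z u =>
    mul_nonneg (div_nonneg (hhnn u) (sq_nonneg _)) (Real.exp_pos _).le
  have hfc : ∀ z, Continuous (f z) := fun z =>
    ((hhc.div (by continuity) hσne).mul ((hFc z).neg.rexp))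
  -- integrability of f z on Ioi z
  have hint : ∀ z, IntegrableOn (f z) (Ioi z) := by
    intro z
    set k : ℝ := c' / 2 with hkdef
    have hkpos : 0 < k := by positivity
    apply integrable_of_isBigO_exp_neg hkpos (hfc z).continuousOn
    rw [Asymptotics.isBigO_iff]
    refine ⟨1, ?_⟩
    -- the auxiliary function tends to 0
    have haux : Tendsto
        (fun u : ℝ => (|b₁| + |b₂| * u ^ n) / σlo ^ 2 * Real.exp (c' * z)
          * Real.exp (-k * u)) atTop (𝓝 0) := by
      have h1 : Tendsto (fun u : ℝ => Real.exp (-(k * u))) atTop (𝓝 0) :=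
        Real.tendsto_exp_neg_atTop_nhds_zero.comp
          (Tendsto.const_mul_atTop hkpos tendsto_id)
      have h2 : Tendsto (fun u : ℝ => (k * u) ^ n * Real.exp (-(k * u))) atTop (𝓝 0) :=
        (Real.tendsto_pow_mul_exp_neg_atTop_nhds_zero n).comp
          (Tendsto.const_mul_atTop hkpos tendsto_id)
      have h3 : Tendsto (fun u : ℝ => u ^ n * Real.exp (-(k * u))) atTop (𝓝 0) := by
        have := h2.const_mul ((k ^ n)⁻¹)
        rw [mul_zero] at this
        refine this.congr fun u => ?_
        rw [mul_pow]
        field_simp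
      have := ((h1.const_mul (|b₁| / σlo ^ 2 * Real.exp (c' * z))).add
        (h3.const_mul (|b₂| / σlo ^ 2 * Real.exp (c' * z))))
      rw [mul_zero, mul_zero, add_zero] at this
      refine this.congr fun u => ?_
      rw [neg_mul]
      ring
    have hsmall : ∀ᶠ u : ℝ in atTop,
        (|b₁| + |b₂| * u ^ n) / σlo ^ 2 * Real.exp (c' * z) * Real.exp (-k * u) ≤ 1 :=
      haux.eventually_le_const one_pos
    filter_upwards [hsmall, eventually_ge_atTop z, eventually_ge_atTop (0 : ℝ)]
      with u hu1 huz hu0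
    have hpow : (0:ℝ) ≤ u ^ n := pow_nonneg hu0 n
    have hhu : h u ≤ |b₁| + |b₂| * u ^ n := by
      calc h u ≤ |h u| := le_abs_self _
        _ ≤ b₁ + b₂ * |u| ^ n := hb u
        _ = b₁ + b₂ * u ^ n := by rw [abs_of_nonneg hu0]
        _ ≤ |b₁| + |b₂| * u ^ n := by
            nlinarith [le_abs_self b₁, le_abs_self b₂]
    have hA : h u / σ u ^ 2 ≤ (|b₁| + |b₂| * u ^ n) / σlo ^ 2 :=
      div_le_div₀ (le_trans (hhnn u) hhu) hhu (pow_pos hσlo 2)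
        (pow_le_pow_left₀ hσlo.le (hσ u).1 2)
    have hB : Real.exp (-(F z u)) ≤ Real.exp (-(c' * (u - z))) := by
      apply Real.exp_le_exp.2
      simp only [neg_le_neg_iff]
      exact hFlb z u huz
    have hfle : f z u ≤ (|b₁| + |b₂| * u ^ n) / σlo ^ 2 * Real.exp (-(c' * (u - z))) := by
      apply mul_le_mul hA hB (Real.exp_pos _).le (by positivity)
    have hexpsplit : Real.exp (-(c' * (u - z)))
        = Real.exp (c' * z) * Real.exp (-k * u) * Real.exp (-k * u) := by
      rw [← Real.exp_add, ← Real.exp_add, hkdef]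
      ring_nf
    rw [Real.norm_eq_abs, Real.norm_eq_abs, abs_of_nonneg (hfnn z u),
      abs_of_pos (Real.exp_pos _), one_mul]
    calc f z u ≤ (|b₁| + |b₂| * u ^ n) / σlo ^ 2 * Real.exp (-(c' * (u - z))) := hfle
      _ = ((|b₁| + |b₂| * u ^ n) / σlo ^ 2 * Real.exp (c' * z) * Real.exp (-k * u))
          * Real.exp (-k * u) := by rw [hexpsplit]; ring
      _ ≤ 1 * Real.exp (-k * u) := by
          apply mul_le_mul_of_nonneg_right hu1 (Real.exp_pos _).le
      _ = Real.exp (-k * u) := one_mul _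
  -- main argument
  rw [tendsto_atTop]
  intro C
  set M : ℝ := max 1 (C * σhi ^ 2 * Real.exp c / 2) with hMdef
  have hM1 : (1 : ℝ) ≤ M := le_max_left _ _
  have hM2 : C * σhi ^ 2 * Real.exp c / 2 ≤ M := le_max_right _ _
  obtain ⟨z₀, hz₀⟩ := (hhtop.eventually_ge_atTop M).exists_forall_of_atTop
  filter_upwards [eventually_ge_atTop z₀] with z hz
  have key : M / σhi ^ 2 * Real.exp (-c) ≤ ∫ u in Ioi z, f z u := by
    have step1 : M / σhi ^ 2 * Real.exp (-c)
        = ∫ _ in Ioc z (z + 1), (M / σhi ^ 2 * Real.exp (-c)) := by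
      rw [setIntegral_const, Real.volume_real_Ioc]
      norm_num
    have step2 : (∫ _ in Ioc z (z + 1), (M / σhi ^ 2 * Real.exp (-c)))
        ≤ ∫ u in Ioc z (z + 1), f z u := by
      apply setIntegral_mono_on
        (integrableOn_const (by rw [Real.volume_Ioc]; exact ENNReal.ofReal_ne_top))
        ((hint z).mono_set Ioc_subset_Ioi_self) measurableSet_Ioc
      intro u hu
      obtain ⟨hu1, hu2⟩ := hu
      have hhu : M ≤ h u := hz₀ u (le_trans hz hu1.le)
      have hA : M / σhi ^ 2 ≤ h u / σ u ^ 2 :=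
        div_le_div₀ (hhnn u) hhu (pow_pos (hσpos u) 2)
          (pow_le_pow_left₀ (hσpos u).le (hσ u).2 2)
      have hB : Real.exp (-c) ≤ Real.exp (-(F z u)) := by
        apply Real.exp_le_exp.2
        simp only [neg_le_neg_iff]
        calc F z u ≤ c * (u - z) := hFub z u hu1.le
          _ ≤ c * 1 := by
            apply mul_le_mul_of_nonneg_left (by linarith) hcpos.le
          _ = c := mul_one c
      exact mul_le_mul hA hB (Real.exp_pos _).le (div_nonneg (hhnn u) (sq_nonneg _))
    have step3 : (∫ u in Ioc z (z + 1), f z u) ≤ ∫ u in Ioi z, f z u := by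
      apply setIntegral_mono_set (hint z) (Filter.Eventually.of_forall (hfnn z))
      exact HasSubset.Subset.eventuallyLE Ioc_subset_Ioi_self
    linarith [step1, step2, step3]
  have hCle : C ≤ 2 * (M / σhi ^ 2 * Real.exp (-c)) := by
    have hec : 0 < Real.exp c := Real.exp_pos c
    have h2M : C * σhi ^ 2 * Real.exp c ≤ 2 * M := by linarith
    rw [Real.exp_neg]
    calc C = C * σhi ^ 2 * Real.exp c / σhi ^ 2 * (Real.exp c)⁻¹ := by field_simp
      _ ≤ 2 * M / σhi ^ 2 * (Real.exp c)⁻¹ := by gcongr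
      _ = 2 * (M / σhi ^ 2 * (Real.exp c)⁻¹) := by ring
  calc C ≤ 2 * (M / σhi ^ 2 * Real.exp (-c)) := hCle
    _ ≤ 2 * ∫ u in Ioi z, f z u := by linarith [key]
end

section
/- Suppose μ, σ : ℝ → ℝ are continuous with 0 < μ̲ ≤ μ ≤ μ̄ < ∞ and 0 < σ̲ ≤ σ ≤ σ̄ < ∞, and h : ℝ → [0,∞) is continuous and polynomially bounded with h(y) → ∞ as y → ∞. With g, ℓ as above, lim_{z→+∞} g(z)/ℓ(z) = lim_{y→∞} h(y) = ∞. -/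
open Filter Set MeasureTheory intervalIntegral

private lemma aux_pow_exp (n : ℕ) {c : ℝ} (hc : 0 < c) {z : ℝ} (hz : 0 ≤ z) :
    MeasureTheory.IntegrableOn (fun u : ℝ => u ^ n * Real.exp (-(c * u))) (Set.Ioi z) := by
  have hs : (-1 : ℝ) < (n : ℝ) := lt_of_lt_of_le (by norm_num) (Nat.cast_nonneg n)
  have h0 : MeasureTheory.IntegrableOn
      (fun x : ℝ => x ^ (n : ℝ) * Real.exp (-c * x ^ (1 : ℝ))) (Set.Ioi 0) :=
    integrableOn_rpow_mul_exp_neg_mul_rpow hs zero_lt_one hc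
  have h1 := h0.mono_set (Set.Ioi_subset_Ioi hz)
  refine h1.congr_fun (fun x _ => ?_) measurableSet_Ioi
  beta_reduce
  rw [Real.rpow_natCast, Real.rpow_one, neg_mul]

/-- The ratio `g(z)/ℓ(z)` diverges as `z → +∞` when `h(y) → ∞` as `y → ∞`. -/
theorem ratio_diverges_at_top
    (μ σ : ℝ → ℝ) (hμc : Continuous μ) (hσc : Continuous σ)
    (μlo μhi σlo σhi : ℝ)
    (hμlo : 0 < μlo) (hμ : ∀ z, μlo ≤ μ z ∧ μ z ≤ μhi)
    (hσlo : 0 < σlo) (hσ : ∀ z, σlo ≤ σ z ∧ σ z ≤ σhi)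
    (h : ℝ → ℝ) (hhc : Continuous h) (hhnn : ∀ z, 0 ≤ h z)
    (hpoly : ∃ b₁ b₂ : ℝ, ∃ n : ℕ, ∀ z, |h z| ≤ b₁ + b₂ * |z| ^ n)
    (hhtop : Tendsto h atTop atTop) :
    Tendsto (fun z : ℝ =>
        (2 * ∫ u in Set.Ioi z,
          (h u / (σ u) ^ 2) * Real.exp (-(∫ y in z..u, 2 * μ y / (σ y) ^ 2))) /
        (2 * ∫ u in Set.Ioi z,
          (1 / (σ u) ^ 2) * Real.exp (-(∫ y in z..u, 2 * μ y / (σ y) ^ 2))))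
      atTop atTop := by
  obtain ⟨b₁, b₂, n, hpoly⟩ := hpoly
  have hσpos : ∀ y, 0 < σ y := fun y => lt_of_lt_of_le hσlo (hσ y).1
  have hσhi : 0 < σhi := lt_of_lt_of_le hσlo (le_trans (hσ 0).1 (hσ 0).2)
  set c : ℝ := 2 * μlo / σhi ^ 2 with hc_def
  have hc : 0 < c := by positivity
  -- the drift integrand
  have hqc : Continuous (fun y => 2 * μ y / σ y ^ 2) :=
    (continuous_const.mul hμc).div (hσc.pow 2) fun y => pow_ne_zero 2 (hσpos y).ne'
  have hqlb : ∀ y, c ≤ 2 * μ y / σ y ^ 2 := by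
    intro y
    rw [hc_def]
    exact div_le_div₀ (by linarith [(hμ y).1, hμlo]) (by linarith [(hμ y).1])
      (pow_pos (hσpos y) 2) (pow_le_pow_left₀ (hσpos y).le (hσ y).2 2)
  -- the weight and its exponential bound
  set f : ℝ → ℝ → ℝ := fun z u => Real.exp (-(∫ y in z..u, 2 * μ y / σ y ^ 2)) with hf_def
  have hfpos : ∀ z u, 0 < f z u := fun z u => Real.exp_pos _
  have hfcont : ∀ z, Continuous (fun u => f z u) := fun z =>
    Real.continuous_exp.comp
      (intervalIntegral.continuous_primitive (fun a b => hqc.intervalIntegrable a b) z).neg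
  have hfbd : ∀ z u, z ≤ u → f z u ≤ Real.exp (c * z) * Real.exp (-(c * u)) := by
    intro z u hzu
    rw [hf_def, ← Real.exp_add]
    apply Real.exp_le_exp.mpr
    have : c * (u - z) ≤ ∫ y in z..u, 2 * μ y / σ y ^ 2 := by
      have h0 := intervalIntegral.integral_mono_on hzu
        (intervalIntegrable_const : IntervalIntegrable (fun _ => c) MeasureTheory.volume z u)
        (hqc.intervalIntegrable z u) (fun y _ => hqlb y)
      rw [intervalIntegral.integral_const, smul_eq_mul] at h0
      linarith
    linarith
  rw [tendsto_atTop]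
  intro C
  obtain ⟨Z, hZ⟩ := (tendsto_atTop.mp hhtop (max C 0)).exists_forall_of_atTop
  filter_upwards [eventually_ge_atTop (max Z 1)] with z hz
  have hz1 : (1 : ℝ) ≤ z := le_trans (le_max_right Z 1) hz
  have hzZ : Z ≤ z := le_trans (le_max_left Z 1) hz
  have hae : ∀ᵐ u ∂(volume.restrict (Set.Ioi z)), u ∈ Set.Ioi z :=
    self_mem_ae_restrict measurableSet_Ioi
  -- integrability of the denominator integrand
  have hDcont : Continuous (fun u => (1 / σ u ^ 2) * f z u) :=
    (continuous_const.div (hσc.pow 2) fun y => pow_ne_zero 2 (hσpos y).ne').mul (hfcont z)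
  have hDint : MeasureTheory.IntegrableOn (fun u => (1 / σ u ^ 2) * f z u) (Set.Ioi z) := by
    have hbint : MeasureTheory.IntegrableOn
        (fun u : ℝ => (Real.exp (c * z) / σlo ^ 2) * Real.exp (-(c * u))) (Set.Ioi z) := by
      have := (exp_neg_integrableOn_Ioi z hc).const_mul (Real.exp (c * z) / σlo ^ 2)
      simpa [neg_mul, IntegrableOn] using this
    refine hbint.mono' hDcont.aestronglyMeasurable ?_
    filter_upwards [hae] with u hu
    have hu' : z ≤ u := le_of_lt hu
    rw [Real.norm_eq_abs, abs_of_nonneg (by positivity)]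
    have h1 : 1 / σ u ^ 2 ≤ 1 / σlo ^ 2 :=
      div_le_div₀ zero_le_one le_rfl (pow_pos hσlo 2) (pow_le_pow_left₀ hσlo.le (hσ u).1 2)
    calc (1 / σ u ^ 2) * f z u ≤ (1 / σlo ^ 2) * (Real.exp (c * z) * Real.exp (-(c * u))) :=
          mul_le_mul h1 (hfbd z u hu') (hfpos z u).le (by positivity)
      _ = (Real.exp (c * z) / σlo ^ 2) * Real.exp (-(c * u)) := by ring
  -- integrability of the numerator integrand
  have hNcont : Continuous (fun u => (h u / σ u ^ 2) * f z u) :=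
    (hhc.div (hσc.pow 2) fun y => pow_ne_zero 2 (hσpos y).ne').mul (hfcont z)
  have hNint : MeasureTheory.IntegrableOn (fun u => (h u / σ u ^ 2) * f z u) (Set.Ioi z) := by
    have hbint : MeasureTheory.IntegrableOn
        (fun u : ℝ => (Real.exp (c * z) / σlo ^ 2) *
          ((|b₁| + |b₂| * u ^ n) * Real.exp (-(c * u)))) (Set.Ioi z) := by
      refine MeasureTheory.Integrable.const_mul ?_ _
      have h1 : MeasureTheory.IntegrableOn
          (fun u : ℝ => |b₁| * Real.exp (-(c * u))) (Set.Ioi z) := by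
        have := (exp_neg_integrableOn_Ioi z hc).const_mul |b₁|
        simpa [neg_mul, IntegrableOn] using this
      have h2 : MeasureTheory.IntegrableOn
          (fun u : ℝ => |b₂| * (u ^ n * Real.exp (-(c * u)))) (Set.Ioi z) :=
        (aux_pow_exp n hc (le_trans zero_le_one hz1)).const_mul |b₂|
      refine MeasureTheory.IntegrableOn.congr_fun (h1.add h2) (fun x _ => ?_) measurableSet_Ioi
      simp only [Pi.add_apply]
      ring
    refine hbint.mono' hNcont.aestronglyMeasurable ?_
    filter_upwards [hae] with u hu
    have hu' : z ≤ u := le_of_lt hu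
    have hupos : (0 : ℝ) < u := lt_of_lt_of_le (lt_of_lt_of_le zero_lt_one hz1) hu'
    have hhu0 := hhnn u
    rw [Real.norm_eq_abs, abs_of_nonneg (by positivity)]
    have hh : h u ≤ |b₁| + |b₂| * u ^ n := by
      calc h u ≤ |h u| := le_abs_self _
        _ ≤ b₁ + b₂ * |u| ^ n := hpoly u
        _ ≤ |b₁| + |b₂| * u ^ n := by
            rw [abs_of_pos hupos]
            have hb2 : b₂ * u ^ n ≤ |b₂| * u ^ n :=
              mul_le_mul_of_nonneg_right (le_abs_self _) (by positivity)
            have hb1 := le_abs_self b₁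
            linarith
    have h1 : h u / σ u ^ 2 ≤ (|b₁| + |b₂| * u ^ n) / σlo ^ 2 :=
      div_le_div₀ (by positivity) hh (pow_pos hσlo 2) (pow_le_pow_left₀ hσlo.le (hσ u).1 2)
    calc (h u / σ u ^ 2) * f z u
        ≤ ((|b₁| + |b₂| * u ^ n) / σlo ^ 2) * (Real.exp (c * z) * Real.exp (-(c * u))) :=
          mul_le_mul h1 (hfbd z u hu') (hfpos z u).le (by positivity)
      _ = (Real.exp (c * z) / σlo ^ 2) * ((|b₁| + |b₂| * u ^ n) * Real.exp (-(c * u))) := by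
          ring
  -- positivity of the denominator
  have hDpos : 0 < ∫ u in Set.Ioi z, (1 / σ u ^ 2) * f z u := by
    rw [setIntegral_pos_iff_support_of_nonneg_ae ?_ hDint]
    · have hsupp : Function.support (fun u => (1 / σ u ^ 2) * f z u) = Set.univ := by
        ext u
        simp only [Function.mem_support, Set.mem_univ, iff_true]
        exact ne_of_gt (mul_pos (div_pos one_pos (pow_pos (hσpos u) 2)) (hfpos z u))
      rw [hsupp, Set.univ_inter, Real.volume_Ioi]
      exact ENNReal.zero_lt_top
    · filter_upwards with u
      positivity
  -- comparison
  have hmono : (max C 0) * ∫ u in Set.Ioi z, (1 / σ u ^ 2) * f z u ≤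
      ∫ u in Set.Ioi z, (h u / σ u ^ 2) * f z u := by
    rw [← MeasureTheory.integral_const_mul]
    refine MeasureTheory.setIntegral_mono_on (hDint.const_mul _) hNint measurableSet_Ioi ?_
    intro u hu
    have hhu : max C 0 ≤ h u := hZ u (le_trans hzZ (le_of_lt hu))
    calc (max C 0) * ((1 / σ u ^ 2) * f z u) ≤ h u * ((1 / σ u ^ 2) * f z u) :=
          mul_le_mul_of_nonneg_right hhu (by positivity)
      _ = (h u / σ u ^ 2) * f z u := by ring
  have key : max C 0 ≤ (∫ u in Set.Ioi z, (h u / σ u ^ 2) * f z u) /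
      ∫ u in Set.Ioi z, (1 / σ u ^ 2) * f z u := (le_div_iff₀ hDpos).mpr hmono
  have h2 : (2 * ∫ u in Set.Ioi z, (h u / σ u ^ 2) * f z u) /
      (2 * ∫ u in Set.Ioi z, (1 / σ u ^ 2) * f z u) =
      (∫ u in Set.Ioi z, (h u / σ u ^ 2) * f z u) /
      ∫ u in Set.Ioi z, (1 / σ u ^ 2) * f z u :=
    mul_div_mul_left _ _ two_ne_zero
  calc C ≤ max C 0 := le_max_left C 0
    _ ≤ _ := by rw [h2]; exact key
end
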